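/- Let A = (Σ₊₁, Σ₀, Σ₋₁, Q, Q₀, Γ, ⟨δ_a⟩_{a∈Σ}, F) be a nondeterministic event-clock input-driven pushdown automaton and let Ψ be the (finite) set of atomic clock constraints occurring in the clock constraints used in its transitions. Then there exists a deterministic event-clock input-driven pushdown automaton B, with set of states Q' = 2^{Q×Q} and pushdown alphabet Γ' = 2^{Q×Q} × Σ₊₁ × 2^{Ψ}, all of whose clock constraints are Boolean combinations of atomic constraints from Ψ, such that B recognizes the same set of timed strings as A. In particular, an n-state nondeterministic automaton with k atomic clock constraints is simulated by a deterministic one with 2^{n²} states and |Σ₊₁|·2^{n²+k} stack symbols. -/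

import Mathlib

/-- Classification of input symbols: left brackets (calls), right brackets
(returns) and neutral (internal) symbols. -/
inductive SymbolKind : Type
  | call | ret | int
  deriving DecidableEq

/-- The event clocks over an alphabet `A`: symbol history clocks `◁a`,
symbol prediction clocks `▷a`, the stack history clock `◁s` and the
stack prediction clock `▷s`. -/
inductive Clock (A : Type) : Type
  | histS (a : A)
  | predS (a : A)
  | histStack
  | predStack

/-- Clock constraints: Boolean combinations of atomic constraints
`C ≤ τ` and `C ≥ τ` (with a trivial constraint `tt`). -/
inductive ClockConstraint (A : Type) : Type
  | tt
  | le (C : Clock A) (τ : ℝ)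
  | ge (C : Clock A) (τ : ℝ)
  | and (φ ψ : ClockConstraint A)
  | or (φ ψ : ClockConstraint A)
  | not (φ : ClockConstraint A)

/-- The atomic constraints occurring in a clock constraint. -/
def ClockConstraint.atoms {A : Type} : ClockConstraint A → Set (ClockConstraint A)
  | .tt => ∅
  | .le C τ => {ClockConstraint.le C τ}
  | .ge C τ => {ClockConstraint.ge C τ}
  | .and φ ψ => φ.atoms ∪ ψ.atoms
  | .or φ ψ => φ.atoms ∪ ψ.atoms
  | .not φ => φ.atoms

/-- The clocks referred to by a clock constraint. -/
def ClockConstraint.clocks {A : Type} : ClockConstraint A → Set (Clock A)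
  | .tt => ∅
  | .le C _ => {C}
  | .ge C _ => {C}
  | .and φ ψ => φ.clocks ∪ ψ.clocks
  | .or φ ψ => φ.clocks ∪ ψ.clocks
  | .not φ => φ.clocks

/-- A timed string: the (real) time stamps are strictly increasing. -/
def IsTimed {A : Type} (w : List (A × ℝ)) : Prop :=
  (w.map Prod.snd).Chain' (· < ·)

/-- Well-nested (balanced) strings: every bracket is matched inside. -/
inductive WellNested {A : Type} (lab : A → SymbolKind) : List A → Prop
  | nil : WellNested lab []
  | int {a : A} {u : List A} :
      lab a = SymbolKind.int → WellNested lab u → WellNested lab (a :: u)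
  | wrap {a b : A} {u v : List A} :
      lab a = SymbolKind.call → lab b = SymbolKind.ret →
      WellNested lab u → WellNested lab v → WellNested lab (a :: u ++ b :: v)

/-- Position `j` holds a left bracket matched by the right bracket at
position `i`: the interior is well-nested. -/
def Matches {A : Type} (lab : A → SymbolKind) (w : List (A × ℝ)) (j i : ℕ) : Prop :=
  j < i ∧ i < w.length ∧
  (∃ p : A × ℝ, w[j]? = some p ∧ lab p.1 = SymbolKind.call) ∧
  (∃ p : A × ℝ, w[i]? = some p ∧ lab p.1 = SymbolKind.ret) ∧
  WellNested lab (((w.map Prod.fst).drop (j + 1)).take (i - j - 1))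

/-- `ClockVal lab w i C v` : the clock `C` is defined at position `i`
of the timed string `w` and has value `v`. -/
def ClockVal {A : Type} (lab : A → SymbolKind) (w : List (A × ℝ)) (i : ℕ) :
    Clock A → ℝ → Prop
  | .histS a, v => ∃ (pi pj : A × ℝ) (j : ℕ), w[i]? = some pi ∧ j < i ∧
      w[j]? = some pj ∧ pj.1 = a ∧
      (∀ (j' : ℕ) (p' : A × ℝ), j < j' → j' < i → w[j']? = some p' → p'.1 ≠ a) ∧
      v = pi.2 - pj.2
  | .predS a, v => ∃ (pi pj : A × ℝ) (j : ℕ), w[i]? = some pi ∧ i < j ∧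
      w[j]? = some pj ∧ pj.1 = a ∧
      (∀ (j' : ℕ) (p' : A × ℝ), i < j' → j' < j → w[j']? = some p' → p'.1 ≠ a) ∧
      v = pj.2 - pi.2
  | .histStack, v => ∃ (pi pj : A × ℝ) (j : ℕ), Matches lab w j i ∧
      w[i]? = some pi ∧ w[j]? = some pj ∧ v = pi.2 - pj.2
  | .predStack, v => ∃ (pi pj : A × ℝ) (j : ℕ), Matches lab w i j ∧
      w[i]? = some pi ∧ w[j]? = some pj ∧ v = pj.2 - pi.2

/-- Truth of a clock constraint at position `i` of the timed string `w`;
an atomic constraint is true only if the clock value is defined. -/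
def Sat {A : Type} (lab : A → SymbolKind) (w : List (A × ℝ)) (i : ℕ) :
    ClockConstraint A → Prop
  | .tt => True
  | .le C τ => ∃ v, ClockVal lab w i C v ∧ v ≤ τ
  | .ge C τ => ∃ v, ClockVal lab w i C v ∧ τ ≤ v
  | .and φ ψ => Sat lab w i φ ∧ Sat lab w i ψ
  | .or φ ψ => Sat lab w i φ ∨ Sat lab w i ψ
  | .not φ => ¬ Sat lab w i φ

/-- A nondeterministic event-clock input-driven pushdown automaton
(ECIDPDA) with states `Q` and stack alphabet `Γ`. -/
structure ECIDPDA (A Q Γ : Type) where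
  init : Set Q
  final : Set Q
  δint : A → Q → ClockConstraint A → Set Q
  δcall : A → Q → ClockConstraint A → Set (Q × Γ)
  δret : A → Option Γ → Q → ClockConstraint A → Set Q

/-- Configurations reachable after reading the first `i` symbols of the
timed string `w` (starting in an initial state with the empty stack);
each transition is guarded by a clock constraint which must be true at
the corresponding position. -/
inductive Reach {A Q Γ : Type} (lab : A → SymbolKind) (M : ECIDPDA A Q Γ)
    (w : List (A × ℝ)) : ℕ → Q × List Γ → Prop
  | start {q : Q} : q ∈ M.init → Reach lab M w 0 (q, [])
  | int {i : ℕ} {q q' : Q} {γ : List Γ} {p : A × ℝ} {φ : ClockConstraint A} :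
      Reach lab M w i (q, γ) → w[i]? = some p → lab p.1 = SymbolKind.int →
      Sat lab w i φ → q' ∈ M.δint p.1 q φ → Reach lab M w (i + 1) (q', γ)
  | call {i : ℕ} {q q' : Q} {γ : List Γ} {s : Γ} {p : A × ℝ} {φ : ClockConstraint A} :
      Reach lab M w i (q, γ) → w[i]? = some p → lab p.1 = SymbolKind.call →
      Sat lab w i φ → (q', s) ∈ M.δcall p.1 q φ → Reach lab M w (i + 1) (q', s :: γ)
  | ret {i : ℕ} {q q' : Q} {γ : List Γ} {s : Γ} {p : A × ℝ} {φ : ClockConstraint A} :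
      Reach lab M w i (q, s :: γ) → w[i]? = some p → lab p.1 = SymbolKind.ret →
      Sat lab w i φ → q' ∈ M.δret p.1 (some s) q φ → Reach lab M w (i + 1) (q', γ)
  | retEmpty {i : ℕ} {q q' : Q} {p : A × ℝ} {φ : ClockConstraint A} :
      Reach lab M w i (q, []) → w[i]? = some p → lab p.1 = SymbolKind.ret →
      Sat lab w i φ → q' ∈ M.δret p.1 none q φ → Reach lab M w (i + 1) (q', [])

/-- Acceptance: some computation reads the whole string and ends in an
accepting state, with any stack contents. -/
def ECIDPDA.Accepts {A Q Γ : Type} (lab : A → SymbolKind) (M : ECIDPDA A Q Γ)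
    (w : List (A × ℝ)) : Prop :=
  ∃ (q : Q) (γ : List Γ), Reach lab M w w.length (q, γ) ∧ q ∈ M.final

/-- The clock constraints actually used (guarding some transition). -/
def ECIDPDA.used {A Q Γ : Type} (M : ECIDPDA A Q Γ) : Set (ClockConstraint A) :=
  {φ | (∃ a q, (M.δint a q φ).Nonempty) ∨ (∃ a q, (M.δcall a q φ).Nonempty) ∨
       (∃ a s q, (M.δret a s q φ).Nonempty)}

/-- The set of atomic constraints occurring in the constraints used in
the transitions. -/
def ECIDPDA.atomicSet {A Q Γ : Type} (M : ECIDPDA A Q Γ) : Set (ClockConstraint A) :=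
  ⋃ φ ∈ M.used, φ.atoms

/-- Determinism: one initial state, at most one transition per clock
constraint, and distinct constraints guarding transitions from the same
state (and popped symbol) are never simultaneously true at any position
of any timed string. -/
def ECIDPDA.Deterministic {A Q Γ : Type} (lab : A → SymbolKind)
    (M : ECIDPDA A Q Γ) : Prop :=
  (∃ q₀ : Q, M.init = {q₀}) ∧
  (∀ a q φ, (M.δint a q φ).Subsingleton) ∧
  (∀ a q φ, (M.δcall a q φ).Subsingleton) ∧
  (∀ a s q φ, (M.δret a s q φ).Subsingleton) ∧
  (∀ a q φ φ', φ ≠ φ' → (M.δint a q φ).Nonempty → (M.δint a q φ').Nonempty →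
    ∀ (w : List (A × ℝ)) (i : ℕ), IsTimed w → i < w.length →
      ¬ (Sat lab w i φ ∧ Sat lab w i φ')) ∧
  (∀ a q φ φ', φ ≠ φ' → (M.δcall a q φ).Nonempty → (M.δcall a q φ').Nonempty →
    ∀ (w : List (A × ℝ)) (i : ℕ), IsTimed w → i < w.length →
      ¬ (Sat lab w i φ ∧ Sat lab w i φ')) ∧
  (∀ a s q φ φ', φ ≠ φ' → (M.δret a s q φ).Nonempty → (M.δret a s q φ').Nonempty →
    ∀ (w : List (A × ℝ)) (i : ℕ), IsTimed w → i < w.length →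
      ¬ (Sat lab w i φ ∧ Sat lab w i φ'))

section Aux

open ClockConstraint

variable {A Q Γ : Type}

/-- No constraint equals its own negation. -/
theorem ClockConstraint.ne_not : ∀ ψ : ClockConstraint A, ψ ≠ ClockConstraint.not ψ
  | .not φ, h => ClockConstraint.ne_not φ (by injection h)
  | .tt, h => by cases h
  | .le _ _, h => by cases h
  | .ge _ _, h => by cases h
  | .and _ _, h => by cases h
  | .or _ _, h => by cases h

theorem ClockConstraint.atoms_finite : ∀ φ : ClockConstraint A, φ.atoms.Finite
  | .tt => Set.finite_empty
  | .le _ _ => Set.finite_singleton _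
  | .ge _ _ => Set.finite_singleton _
  | .and φ ψ => (atoms_finite φ).union (atoms_finite ψ)
  | .or φ ψ => (atoms_finite φ).union (atoms_finite ψ)
  | .not φ => atoms_finite φ

theorem ClockConstraint.atoms_atomic :
    ∀ (φ : ClockConstraint A) (ψ : ClockConstraint A), ψ ∈ φ.atoms → ψ.atoms = {ψ}
  | .tt, ψ, h => absurd h (by simp [ClockConstraint.atoms])
  | .le C τ, ψ, h => by
      simp only [ClockConstraint.atoms, Set.mem_singleton_iff] at h
      subst h; rfl
  | .ge C τ, ψ, h => by
      simp only [ClockConstraint.atoms, Set.mem_singleton_iff] at h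
      subst h; rfl
  | .and φ₁ φ₂, ψ, h => by
      rcases h with h | h
      exacts [atoms_atomic φ₁ ψ h, atoms_atomic φ₂ ψ h]
  | .or φ₁ φ₂, ψ, h => by
      rcases h with h | h
      exacts [atoms_atomic φ₁ ψ h, atoms_atomic φ₂ ψ h]
  | .not φ, ψ, h => atoms_atomic φ ψ h

variable (M : ECIDPDA A Q Γ)

theorem ECIDPDA.used_atoms {φ : ClockConstraint A} (h : φ ∈ M.used) :
    φ.atoms ⊆ M.atomicSet := fun ψ hψ => Set.mem_biUnion h hψ

theorem ECIDPDA.atomicSet_finite (hfin : M.used.Finite) : M.atomicSet.Finite :=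
  Set.Finite.biUnion hfin fun φ _ => φ.atoms_finite

theorem ECIDPDA.atomicSet_atomic {ψ : ClockConstraint A} (h : ψ ∈ M.atomicSet) :
    ψ.atoms = {ψ} := by
  rcases Set.mem_iUnion₂.mp h with ⟨φ, _, hψ⟩
  exact φ.atoms_atomic ψ hψ

/-- Truth value assignment to the atoms: the set of atoms true at position `i`. -/
def trueT (lab : A → SymbolKind) (w : List (A × ℝ)) (i : ℕ) : Set ↥M.atomicSet :=
  {ψ | Sat lab w i ψ.1}

/-- Evaluate a constraint using a truth assignment for the atoms. -/
def evalB (T : Set ↥M.atomicSet) : ClockConstraint A → Prop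
  | .tt => True
  | .le C τ => ∃ h : ClockConstraint.le C τ ∈ M.atomicSet, (⟨_, h⟩ : ↥M.atomicSet) ∈ T
  | .ge C τ => ∃ h : ClockConstraint.ge C τ ∈ M.atomicSet, (⟨_, h⟩ : ↥M.atomicSet) ∈ T
  | .and φ ψ => evalB T φ ∧ evalB T ψ
  | .or φ ψ => evalB T φ ∨ evalB T ψ
  | .not φ => ¬ evalB T φ

theorem evalB_correct (lab : A → SymbolKind) (w : List (A × ℝ)) (i : ℕ) :
    ∀ φ : ClockConstraint A, φ.atoms ⊆ M.atomicSet →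
      (evalB M (trueT M lab w i) φ ↔ Sat lab w i φ)
  | .tt, _ => Iff.rfl
  | .le C τ, h => by
      have hm : ClockConstraint.le C τ ∈ M.atomicSet := h rfl
      simp only [evalB, trueT, Set.mem_setOf_eq]
      exact ⟨fun ⟨_, hs⟩ => hs, fun hs => ⟨hm, hs⟩⟩
  | .ge C τ, h => by
      have hm : ClockConstraint.ge C τ ∈ M.atomicSet := h rfl
      simp only [evalB, trueT, Set.mem_setOf_eq]
      exact ⟨fun ⟨_, hs⟩ => hs, fun hs => ⟨hm, hs⟩⟩
  | .and φ ψ, h => by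
      have h1 := evalB_correct lab w i φ (fun x hx => h (Or.inl hx))
      have h2 := evalB_correct lab w i ψ (fun x hx => h (Or.inr hx))
      exact and_congr h1 h2
  | .or φ ψ, h => by
      have h1 := evalB_correct lab w i φ (fun x hx => h (Or.inl hx))
      have h2 := evalB_correct lab w i ψ (fun x hx => h (Or.inr hx))
      exact or_congr h1 h2
  | .not φ, h => not_congr (evalB_correct lab w i φ h)

open Classical in
/-- The canonical grd constraint associated with a truth assignment `T`,
relative to a list `L` enumerating the atomic constraints. -/
noncomputable def grd (L : List (ClockConstraint A)) (T : Set ↥M.atomicSet) :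
    ClockConstraint A :=
  L.foldr
    (fun ψ acc => ClockConstraint.and
      (if (∃ h : ψ ∈ M.atomicSet, (⟨ψ, h⟩ : ↥M.atomicSet) ∈ T) then ψ else ClockConstraint.not ψ)
      acc)
    ClockConstraint.tt

theorem guard_sat_aux (lab : A → SymbolKind) (w : List (A × ℝ)) (i : ℕ)
    (L : List (ClockConstraint A)) (hL : ∀ ψ ∈ L, ψ ∈ M.atomicSet) (T : Set ↥M.atomicSet) :
    Sat lab w i (grd M L T) ↔
      ∀ ψ ∈ L, ((∃ h : ψ ∈ M.atomicSet, (⟨ψ, h⟩ : ↥M.atomicSet) ∈ T) ↔ Sat lab w i ψ) := by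
  classical
  induction L with
  | nil => simp [grd, Sat]
  | cons ψ L ih =>
    have hmem : ψ ∈ M.atomicSet := hL ψ (List.mem_cons_self)
    have ih' := ih (fun x hx => hL x (List.mem_cons_of_mem _ hx))
    simp only [grd, List.foldr_cons] at *
    constructor
    · rintro ⟨h1, h2⟩
      intro x hx
      rcases List.mem_cons.mp hx with rfl | hx
      · by_cases hc : (∃ h : x ∈ M.atomicSet, (⟨x, h⟩ : ↥M.atomicSet) ∈ T)
        · rw [if_pos hc] at h1; exact ⟨fun _ => h1, fun _ => hc⟩
        · rw [if_neg hc] at h1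
          exact ⟨fun h => absurd h hc, fun h => absurd h h1⟩
      · exact ih'.mp h2 x hx
    · intro h
      refine ⟨?_, ih'.mpr fun x hx => h x (List.mem_cons_of_mem _ hx)⟩
      have hx := h ψ (List.mem_cons_self)
      by_cases hc : (∃ h : ψ ∈ M.atomicSet, (⟨ψ, h⟩ : ↥M.atomicSet) ∈ T)
      · rw [if_pos hc]; exact hx.mp hc
      · rw [if_neg hc]; exact fun hs => hc (hx.mpr hs)

theorem guard_inj_aux (L : List (ClockConstraint A)) (T T' : Set ↥M.atomicSet)
    (h : grd M L T = grd M L T') :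
    ∀ ψ ∈ L, ((∃ h : ψ ∈ M.atomicSet, (⟨ψ, h⟩ : ↥M.atomicSet) ∈ T) ↔
              (∃ h : ψ ∈ M.atomicSet, (⟨ψ, h⟩ : ↥M.atomicSet) ∈ T')) := by
  classical
  induction L with
  | nil => intro ψ h; exact absurd h List.not_mem_nil
  | cons ψ L ih =>
    simp only [grd, List.foldr_cons] at h
    injection h with h1 h2
    intro x hx
    rcases List.mem_cons.mp hx with rfl | hx
    · by_cases hc : (∃ h : x ∈ M.atomicSet, (⟨x, h⟩ : ↥M.atomicSet) ∈ T) <;>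
        by_cases hc' : (∃ h : x ∈ M.atomicSet, (⟨x, h⟩ : ↥M.atomicSet) ∈ T')
      · exact ⟨fun _ => hc', fun _ => hc⟩
      · rw [if_pos hc, if_neg hc'] at h1
        exact absurd h1 (ClockConstraint.ne_not x)
      · rw [if_neg hc, if_pos hc'] at h1
        exact absurd h1.symm (ClockConstraint.ne_not x)
      · exact ⟨fun h => absurd h hc, fun h => absurd h hc'⟩
    · exact ih h2 x hx

theorem guard_atoms (L : List (ClockConstraint A)) (hL : ∀ ψ ∈ L, ψ ∈ M.atomicSet)
    (T : Set ↥M.atomicSet) : (grd M L T).atoms ⊆ M.atomicSet := by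
  classical
  induction L with
  | nil => simp [grd, ClockConstraint.atoms]
  | cons ψ L ih =>
    have hmem : ψ ∈ M.atomicSet := hL ψ (List.mem_cons_self)
    have ih' := ih (fun x hx => hL x (List.mem_cons_of_mem _ hx))
    simp only [grd, List.foldr_cons, ClockConstraint.atoms]
    intro x hx
    rcases hx with hx | hx
    · by_cases hc : (∃ h : ψ ∈ M.atomicSet, (⟨ψ, h⟩ : ↥M.atomicSet) ∈ T)
      · rw [if_pos hc] at hx
        rw [M.atomicSet_atomic hmem] at hx
        rcases hx with rfl; exact hmem
      · rw [if_neg hc] at hx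
        simp only [ClockConstraint.atoms] at hx
        rw [M.atomicSet_atomic hmem] at hx
        rcases hx with rfl; exact hmem
    · exact ih' hx

end Aux
section Runs

variable {A Q Γ : Type}

/-- The stack height after reading `i` symbols (determined by the input). -/
def height (lab : A → SymbolKind) (w : List (A × ℝ)) : ℕ → ℕ
  | 0 => 0
  | i+1 =>
    match w[i]? with
    | some p =>
      match lab p.1 with
      | .call => height lab w i + 1
      | .ret => height lab w i - 1
      | .int => height lab w i
    | none => height lab w i

/-- Partial runs of `M` over a segment, starting at position `j` in state `q₀`
with empty (local) stack, never popping the empty stack. -/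
inductive SegReach (lab : A → SymbolKind) (M : ECIDPDA A Q Γ) (w : List (A × ℝ))
    (j : ℕ) (q₀ : Q) : ℕ → Q × List Γ → Prop
  | start : SegReach lab M w j q₀ j (q₀, [])
  | int {i : ℕ} {q q' : Q} {γ : List Γ} {p : A × ℝ} {φ : ClockConstraint A} :
      SegReach lab M w j q₀ i (q, γ) → w[i]? = some p → lab p.1 = SymbolKind.int →
      Sat lab w i φ → q' ∈ M.δint p.1 q φ → SegReach lab M w j q₀ (i + 1) (q', γ)
  | call {i : ℕ} {q q' : Q} {γ : List Γ} {s : Γ} {p : A × ℝ} {φ : ClockConstraint A} :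
      SegReach lab M w j q₀ i (q, γ) → w[i]? = some p → lab p.1 = SymbolKind.call →
      Sat lab w i φ → (q', s) ∈ M.δcall p.1 q φ → SegReach lab M w j q₀ (i + 1) (q', s :: γ)
  | ret {i : ℕ} {q q' : Q} {γ : List Γ} {s : Γ} {p : A × ℝ} {φ : ClockConstraint A} :
      SegReach lab M w j q₀ i (q, s :: γ) → w[i]? = some p → lab p.1 = SymbolKind.ret →
      Sat lab w i φ → q' ∈ M.δret p.1 (some s) q φ → SegReach lab M w j q₀ (i + 1) (q', γ)

variable {lab : A → SymbolKind} {M : ECIDPDA A Q Γ} {w : List (A × ℝ)}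

theorem reach_len {i : ℕ} {q : Q} {γ : List Γ} (h : Reach lab M w i (q, γ)) :
    γ.length = height lab w i := by
  generalize hc : (q, γ) = c at h
  induction h generalizing q γ with
  | start _ => cases hc; rfl
  | int _ hw hl _ _ ih => cases hc; simp only [height, hw, hl]; exact ih rfl
  | call _ hw hl _ _ ih =>
      cases hc; simp only [height, hw, hl, List.length_cons]
      have := ih rfl; omega
  | ret _ hw hl _ _ ih =>
      cases hc; simp only [height, hw, hl]
      have := ih rfl; simp only [List.length_cons] at this; omega
  | retEmpty _ hw hl _ _ ih =>
      cases hc; simp only [height, hw, hl]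
      have := ih rfl; simp only [List.length_nil] at this ⊢; omega
theorem segreach_le {j : ℕ} {q₀ : Q} {i : ℕ} {c : Q × List Γ}
    (h : SegReach lab M w j q₀ i c) : j ≤ i := by
  induction h with
  | start => exact le_refl _
  | int _ _ _ _ _ ih => omega
  | call _ _ _ _ _ ih => omega
  | ret _ _ _ _ _ ih => omega

theorem segreach_len {j : ℕ} {q₀ : Q} {i : ℕ} {q : Q} {γ : List Γ}
    (h : SegReach lab M w j q₀ i (q, γ)) :
    height lab w i = γ.length + height lab w j := by
  generalize hc : (q, γ) = c at h
  induction h generalizing q γ with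
  | start => cases hc; simp
  | int _ hw hl _ _ ih => cases hc; simp only [height, hw, hl]; exact ih rfl
  | call _ hw hl _ _ ih =>
      cases hc; simp only [height, hw, hl, List.length_cons]
      have := ih rfl; omega
  | ret _ hw hl _ _ ih =>
      cases hc; simp only [height, hw, hl]
      have := ih rfl; simp only [List.length_cons] at this; omega

/-- Lifting a segment run on top of an actual reachable configuration. -/
theorem segreach_lift {j : ℕ} {q₀ : Q} {i : ℕ} {q : Q} {μ δ : List Γ}
    (h : SegReach lab M w j q₀ i (q, μ)) (h0 : Reach lab M w j (q₀, δ)) :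
    Reach lab M w i (q, μ ++ δ) := by
  generalize hc : (q, μ) = c at h
  induction h generalizing q μ with
  | start => cases hc; exact h0
  | int h1 hw hl hs ht ih => cases hc; exact Reach.int (ih rfl) hw hl hs ht
  | call h1 hw hl hs ht ih => cases hc; exact Reach.call (ih rfl) hw hl hs ht
  | ret h1 hw hl hs ht ih => cases hc; exact Reach.ret (ih rfl) hw hl hs ht

/-- Composition of segment runs. -/
theorem segreach_trans {j k i : ℕ} {q₀ q₁ q₂ : Q} {μ ν : List Γ}
    (h1 : SegReach lab M w j q₀ k (q₁, μ)) (h2 : SegReach lab M w k q₁ i (q₂, ν)) :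
    SegReach lab M w j q₀ i (q₂, ν ++ μ) := by
  generalize hc : (q₂, ν) = c at h2
  induction h2 generalizing q₂ ν with
  | start => cases hc; exact h1
  | int h hw hl hs ht ih => cases hc; exact SegReach.int (ih rfl) hw hl hs ht
  | call h hw hl hs ht ih => cases hc; exact SegReach.call (ih rfl) hw hl hs ht
  | ret h hw hl hs ht ih => cases hc; exact SegReach.ret (ih rfl) hw hl hs ht

theorem segreach_self {j : ℕ} {q₀ : Q} {c : Q × List Γ}
    (h : SegReach lab M w j q₀ j c) : c = (q₀, []) := by
  cases h with
  | start => rfl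
  | int h1 _ _ _ _ => exact absurd (segreach_le h1) (by omega)
  | call h1 _ _ _ _ => exact absurd (segreach_le h1) (by omega)
  | ret h1 _ _ _ _ => exact absurd (segreach_le h1) (by omega)

end Runs
section Decompose

variable {A Q Γ : Type} {lab : A → SymbolKind} {M : ECIDPDA A Q Γ} {w : List (A × ℝ)}

theorem reach_decompose {c b : ℕ} :
    ∀ i, c < i → ∀ {q' : Q} {γ : List Γ}, Reach lab M w i (q', γ) →
      (∀ k, c < k → k ≤ i → b + 1 ≤ height lab w k) →
      height lab w (c + 1) = b + 1 →
      ∃ (q₂ : Q) (δ μ : List Γ), γ = μ ++ δ ∧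
        Reach lab M w (c + 1) (q₂, δ) ∧ SegReach lab M w (c + 1) q₂ i (q', μ) := by
  intro i
  induction i with
  | zero => omega
  | succ i IH =>
    intro hci q' γ h hmin hc1
    rcases eq_or_lt_of_le (Nat.lt_succ_iff.mp hci) with rfl | hci'
    · exact ⟨q', γ, [], rfl, h, SegReach.start⟩
    · have hmin' : ∀ k, c < k → k ≤ i → b + 1 ≤ height lab w k :=
        fun k h1 h2 => hmin k h1 (by omega)
      cases h with
      | int h1 hw hl hs ht =>
        obtain ⟨q₂, δ, μ, rfl, h2, h3⟩ := IH hci' h1 hmin' hc1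
        exact ⟨q₂, δ, μ, rfl, h2, SegReach.int h3 hw hl hs ht⟩
      | call h1 hw hl hs ht =>
        obtain ⟨q₂, δ, μ, rfl, h2, h3⟩ := IH hci' h1 hmin' hc1
        exact ⟨q₂, δ, _ :: μ, rfl, h2, SegReach.call h3 hw hl hs ht⟩
      | ret h1 hw hl hs ht =>
        obtain ⟨q₂, δ, μ, heq, h2, h3⟩ := IH hci' h1 hmin' hc1
        have hlen1 : δ.length = b + 1 := by rw [reach_len h2, hc1]
        have hlen2 := reach_len h1
        have hhi : b + 1 ≤ height lab w (i + 1) := hmin (i + 1) (by omega) (le_refl _)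
        have hhi1 : height lab w (i + 1) = height lab w i - 1 := by
          simp only [height, hw, hl]
        cases μ with
        | nil =>
          exfalso
          simp only [List.nil_append] at heq
          subst heq
          simp only [List.length_cons, hlen1] at hlen2
          omega
        | cons s' μ' =>
          obtain ⟨rfl, heq'⟩ : s' = _ ∧ μ' ++ δ = _ := by
            simpa using congrArg (fun l => (l.head?, l.tail)) heq.symm
          exact ⟨q₂, δ, μ', heq'.symm, h2, SegReach.ret h3 hw hl hs ht⟩
      | retEmpty h1 hw hl hs ht =>
        exfalso
        have e1 := reach_len h1
        have e2 := hmin i (by omega) (by omega)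
        simp only [List.length_nil] at e1
        omega

theorem segreach_decompose {j c b : ℕ} {q₀ : Q} :
    ∀ i, c < i → ∀ {q' : Q} {γ : List Γ}, SegReach lab M w j q₀ i (q', γ) →
      j ≤ c →
      (∀ k, c < k → k ≤ i → b + 1 ≤ height lab w k) →
      height lab w (c + 1) = b + 1 →
      ∃ (q₂ : Q) (δ μ : List Γ), γ = μ ++ δ ∧
        SegReach lab M w j q₀ (c + 1) (q₂, δ) ∧ SegReach lab M w (c + 1) q₂ i (q', μ) := by
  intro i
  induction i with
  | zero => omega
  | succ i IH =>
    intro hci q' γ h hjc hmin hc1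
    rcases eq_or_lt_of_le (Nat.lt_succ_iff.mp hci) with rfl | hci'
    · exact ⟨q', γ, [], rfl, h, SegReach.start⟩
    · have hmin' : ∀ k, c < k → k ≤ i → b + 1 ≤ height lab w k :=
        fun k h1 h2 => hmin k h1 (by omega)
      cases h with
      | start => omega
      | int h1 hw hl hs ht =>
        obtain ⟨q₂, δ, μ, rfl, h2, h3⟩ := IH hci' h1 hjc hmin' hc1
        exact ⟨q₂, δ, μ, rfl, h2, SegReach.int h3 hw hl hs ht⟩
      | call h1 hw hl hs ht =>
        obtain ⟨q₂, δ, μ, rfl, h2, h3⟩ := IH hci' h1 hjc hmin' hc1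
        exact ⟨q₂, δ, _ :: μ, rfl, h2, SegReach.call h3 hw hl hs ht⟩
      | ret h1 hw hl hs ht =>
        obtain ⟨q₂, δ, μ, heq, h2, h3⟩ := IH hci' h1 hjc hmin' hc1
        have hlen1 := segreach_len h2
        have hlen2 := segreach_len h1
        have hhi : b + 1 ≤ height lab w (i + 1) := hmin (i + 1) (by omega) (le_refl _)
        have hhi1 : height lab w (i + 1) = height lab w i - 1 := by
          simp only [height, hw, hl]
        cases μ with
        | nil =>
          exfalso
          simp only [List.nil_append] at heq
          subst heq
          rw [hc1] at hlen1
          simp only [List.length_cons] at hlen1 hlen2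
          omega
        | cons s' μ' =>
          obtain ⟨rfl, heq'⟩ : s' = _ ∧ μ' ++ δ = _ := by
            simpa using congrArg (fun l => (l.head?, l.tail)) heq.symm
          exact ⟨q₂, δ, μ', heq'.symm, h2, SegReach.ret h3 hw hl hs ht⟩

end Decompose
section Det

variable {A Q Γ : Type} (lab : A → SymbolKind) (M : ECIDPDA A Q Γ)

/-- Stack alphabet of the determinized automaton. -/
abbrev DStack := Set (Q × Q) × {a : A // lab a = SymbolKind.call} × Set ↥M.atomicSet

def intStep (a : A) (S : Set (Q × Q)) (T : Set ↥M.atomicSet) : Set (Q × Q) :=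
  {p | ∃ q₁ φ, (p.1, q₁) ∈ S ∧ evalB M T φ ∧ p.2 ∈ M.δint a q₁ φ}

def callStep (a : A) (S : Set (Q × Q)) (T : Set ↥M.atomicSet) : Set (Q × Q) :=
  {p | p.1 = p.2 ∧ ∃ q q₁ φ γ, (q, q₁) ∈ S ∧ evalB M T φ ∧ (p.1, γ) ∈ M.δcall a q₁ φ}

def retStepTop (a : A) (S : Set (Q × Q)) (U : Set ↥M.atomicSet) : Set (Q × Q) :=
  {p | ∃ q₃ φ, (p.1, q₃) ∈ S ∧ evalB M U φ ∧ p.2 ∈ M.δret a none q₃ φ}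

def retStepPop (a : A) (t : DStack lab M) (S : Set (Q × Q)) (U : Set ↥M.atomicSet) :
    Set (Q × Q) :=
  {p | ∃ q₁ q₂ q₃ γ φc φr, (p.1, q₁) ∈ t.1 ∧ evalB M t.2.2 φc ∧
       (q₂, γ) ∈ M.δcall t.2.1.1 q₁ φc ∧ (q₂, q₃) ∈ S ∧ evalB M U φr ∧
       p.2 ∈ M.δret a (some γ) q₃ φr}

def retStep (a : A) (os : Option (DStack lab M)) (S : Set (Q × Q))
    (T : Set ↥M.atomicSet) : Set (Q × Q) :=
  match os with
  | none => retStepTop M a S T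
  | some t => retStepPop lab M a t S T

/-- The determinized automaton. -/
def detAut (L : List (ClockConstraint A)) : ECIDPDA A (Set (Q × Q)) (DStack lab M) where
  init := { {p | p.1 ∈ M.init ∧ p.1 = p.2} }
  final := {S | ∃ p ∈ S, p.2 ∈ M.final}
  δint := fun a S φ => {S' | ∃ T, φ = grd M L T ∧ S' = intStep M a S T}
  δcall := fun a S φ => {x | ∃ (T : Set ↥M.atomicSet) (h : lab a = SymbolKind.call),
      φ = grd M L T ∧ x = (callStep M a S T, (S, ⟨a, h⟩, T))}
  δret := fun a os S φ => {S' | ∃ T, φ = grd M L T ∧ S' = retStep lab M a os S T}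

variable {lab M}
variable {L : List (ClockConstraint A)}

theorem grd_sat_trueT (hL : ∀ ψ, ψ ∈ L ↔ ψ ∈ M.atomicSet) (w : List (A × ℝ)) (i : ℕ) :
    Sat lab w i (grd M L (trueT M lab w i)) := by
  rw [guard_sat_aux M lab w i L (fun ψ h => (hL ψ).mp h)]
  intro ψ hψ
  exact ⟨fun ⟨_, hs⟩ => hs, fun hs => ⟨(hL ψ).mp hψ, hs⟩⟩

theorem grd_sat_eq (hL : ∀ ψ, ψ ∈ L ↔ ψ ∈ M.atomicSet) {w : List (A × ℝ)} {i : ℕ} {T : Set ↥M.atomicSet}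
    (h : Sat lab w i (grd M L T)) : T = trueT M lab w i := by
  rw [guard_sat_aux M lab w i L (fun ψ h => (hL ψ).mp h)] at h
  ext ⟨ψ, hψ⟩
  have := h ψ ((hL ψ).mpr hψ)
  exact ⟨fun ht => this.mp ⟨hψ, ht⟩, fun hs => by
    obtain ⟨_, ht⟩ := this.mpr hs; exact ht⟩

theorem grd_inj (hL : ∀ ψ, ψ ∈ L ↔ ψ ∈ M.atomicSet) {T T' : Set ↥M.atomicSet} (h : grd M L T = grd M L T') : T = T' := by
  have := guard_inj_aux M L T T' h
  ext ⟨ψ, hψ⟩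
  have h2 := this ψ ((hL ψ).mpr hψ)
  exact ⟨fun ht => (h2.mp ⟨hψ, ht⟩).2, fun ht => (h2.mpr ⟨hψ, ht⟩).2⟩

theorem detAut_deterministic (hL : ∀ ψ, ψ ∈ L ↔ ψ ∈ M.atomicSet) : ECIDPDA.Deterministic lab (detAut lab M L) := by
  refine ⟨⟨_, rfl⟩, ?_, ?_, ?_, ?_, ?_, ?_⟩
  · rintro a q φ S ⟨T, rfl, rfl⟩ S' ⟨T', hT', rfl⟩
    rw [grd_inj hL hT']
  · rintro a q φ x ⟨T, h, rfl, rfl⟩ x' ⟨T', h', hT', rfl⟩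
    rw [grd_inj hL hT']
  · rintro a s q φ S ⟨T, rfl, rfl⟩ S' ⟨T', hT', rfl⟩
    rw [grd_inj hL hT']
  · rintro a q φ φ' hne ⟨S, T, rfl, rfl⟩ ⟨S', T', rfl, rfl⟩ w i _ _ ⟨hs, hs'⟩
    exact hne (by rw [grd_sat_eq hL hs, grd_sat_eq hL hs'])
  · rintro a q φ φ' hne ⟨x, T, h, rfl, rfl⟩ ⟨x', T', h', rfl, rfl⟩ w i _ _ ⟨hs, hs'⟩
    exact hne (by rw [grd_sat_eq hL hs, grd_sat_eq hL hs'])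
  · rintro a s q φ φ' hne ⟨S, T, rfl, rfl⟩ ⟨S', T', rfl, rfl⟩ w i _ _ ⟨hs, hs'⟩
    exact hne (by rw [grd_sat_eq hL hs, grd_sat_eq hL hs'])

theorem detAut_used_atoms (hL' : ∀ ψ ∈ L, ψ ∈ M.atomicSet) :
    ∀ φ ∈ (detAut lab M L).used, φ.atoms ⊆ M.atomicSet := by
  rintro φ (⟨a, q, S, T, rfl, _⟩ | ⟨a, q, x, T, _, rfl, _⟩ | ⟨a, s, q, S, T, rfl, _⟩) <;>
    exact guard_atoms M L hL' T

end Det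
section DInv

variable {A Q Γ : Type} (lab : A → SymbolKind) (M : ECIDPDA A Q Γ) (w : List (A × ℝ))

/-- The simulation invariant tying a configuration of the determinized
automaton to the runs of `M`. -/
def DInv : ℕ → Set (Q × Q) → List (DStack lab M) → Prop
  | i, S, [] =>
      height lab w i = 0 ∧
      (∀ p ∈ S, p.1 ∈ M.init ∧ ∃ γ, Reach lab M w i (p.2, γ)) ∧
      (∀ q' γ, Reach lab M w i (q', γ) → ∃ q, (q, q') ∈ S)
  | i, S, t :: σ =>
      ∃ cp, cp < i ∧
        (∃ τ, w[cp]? = some (t.2.1.1, τ)) ∧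
        t.2.2 = trueT M lab w cp ∧
        DInv cp t.1 σ ∧
        height lab w (cp + 1) = σ.length + 1 ∧
        height lab w i = σ.length + 1 ∧
        (∀ k, cp < k → k ≤ i → σ.length + 1 ≤ height lab w k) ∧
        (∀ p ∈ S, (∃ δ, Reach lab M w (cp + 1) (p.1, δ)) ∧
                  (∃ μ, SegReach lab M w (cp + 1) p.1 i (p.2, μ))) ∧
        (∀ q₂ q₃, (∃ δ, Reach lab M w (cp + 1) (q₂, δ)) →
                  (∃ μ, SegReach lab M w (cp + 1) q₂ i (q₃, μ)) → (q₂, q₃) ∈ S)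

variable {lab M w}

theorem inv_height {i : ℕ} {S : Set (Q × Q)} {σ : List (DStack lab M)}
    (h : DInv lab M w i S σ) : height lab w i = σ.length := by
  cases σ with
  | nil => exact h.1
  | cons t σ => obtain ⟨cp, _, _, _, _, _, h6, _⟩ := h; simpa using h6

theorem inv_sound {i : ℕ} {S : Set (Q × Q)} {σ : List (DStack lab M)}
    (h : DInv lab M w i S σ) : ∀ p ∈ S, ∃ γ, Reach lab M w i (p.2, γ) := by
  cases σ with
  | nil => exact fun p hp => (h.2.1 p hp).2
  | cons t σ =>
    obtain ⟨cp, _, _, _, _, _, _, _, hsound, _⟩ := h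
    intro p hp
    obtain ⟨⟨δ, h1⟩, ⟨μ, h2⟩⟩ := hsound p hp
    exact ⟨μ ++ δ, segreach_lift h2 h1⟩

theorem inv_comp {i : ℕ} {S : Set (Q × Q)} {σ : List (DStack lab M)}
    (h : DInv lab M w i S σ) : ∀ q' γ, Reach lab M w i (q', γ) → ∃ q, (q, q') ∈ S := by
  cases σ with
  | nil => exact h.2.2
  | cons t σ =>
    obtain ⟨cp, hcp, _, _, _, hh1, _, hmin, _, hcomp⟩ := h
    intro q' γ hr
    obtain ⟨q₂, δ, μ, rfl, h2, h3⟩ := reach_decompose i hcp hr hmin hh1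
    exact ⟨q₂, hcomp q₂ q' ⟨δ, h2⟩ ⟨μ, h3⟩⟩

end DInv
section Unique

variable {A Q Γ : Type} {lab : A → SymbolKind} {M : ECIDPDA A Q Γ}
variable {L : List (ClockConstraint A)}

theorem detAut_unique (hL : ∀ ψ, ψ ∈ L ↔ ψ ∈ M.atomicSet) {w : List (A × ℝ)} :
    ∀ {i : ℕ} {C C' : Set (Q × Q) × List (DStack lab M)},
      Reach lab (detAut lab M L) w i C → Reach lab (detAut lab M L) w i C' → C = C' := by
  intro i C C' h h'
  induction h generalizing C' with
  | @start S hS =>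
    cases h' with
    | @start S' hS' =>
      cases (show S = _ from hS)
      cases (show S' = _ from hS')
      rfl
  | @int i S S₁ σ p φ h1 hw hl hs ht ih =>
    obtain ⟨T, rfl, rfl⟩ := ht
    cases h' with
    | int h1' hw' hl' hs' ht' =>
      obtain ⟨T', hg', rfl⟩ := ht'
      rw [hw] at hw'; injection hw' with hpp; subst hpp
      obtain ⟨rfl, rfl⟩ := Prod.mk.injEq .. ▸ ih h1'
      rw [grd_sat_eq hL hs, ← grd_sat_eq hL (hg' ▸ hs')]
    | call h1' hw' hl' hs' ht' =>
      rw [hw] at hw'; cases hw'; rw [hl] at hl'; cases hl'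
    | ret h1' hw' hl' hs' ht' =>
      rw [hw] at hw'; cases hw'; rw [hl] at hl'; cases hl'
    | retEmpty h1' hw' hl' hs' ht' =>
      rw [hw] at hw'; cases hw'; rw [hl] at hl'; cases hl'
  | @call i S S₁ σ s p φ h1 hw hl hs ht ih =>
    obtain ⟨T, hc, rfl, het⟩ := ht
    cases h' with
    | call h1' hw' hl' hs' ht' =>
      obtain ⟨T', hc', hg', het'⟩ := ht'
      rw [hw] at hw'; injection hw' with hpp; subst hpp
      obtain ⟨rfl, rfl⟩ := Prod.mk.injEq .. ▸ ih h1'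
      have hTT : T = T' := by
        rw [grd_sat_eq hL hs, ← grd_sat_eq hL (hg' ▸ hs')]
      subst hTT
      rw [Prod.mk.injEq] at het het'
      obtain ⟨rfl, rfl⟩ := het
      obtain ⟨rfl, rfl⟩ := het'
      rfl
    | int h1' hw' hl' hs' ht' =>
      rw [hw] at hw'; cases hw'; rw [hl] at hl'; cases hl'
    | ret h1' hw' hl' hs' ht' =>
      rw [hw] at hw'; cases hw'; rw [hl] at hl'; cases hl'
    | retEmpty h1' hw' hl' hs' ht' =>
      rw [hw] at hw'; cases hw'; rw [hl] at hl'; cases hl'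
  | @ret i S S₁ σ s p φ h1 hw hl hs ht ih =>
    obtain ⟨T, rfl, rfl⟩ := ht
    cases h' with
    | ret h1' hw' hl' hs' ht' =>
      obtain ⟨T', hg', rfl⟩ := ht'
      rw [hw] at hw'; injection hw' with hpp; subst hpp
      have := ih h1'
      rw [Prod.mk.injEq] at this
      obtain ⟨rfl, hlist⟩ := this
      obtain ⟨rfl, rfl⟩ := List.cons.injEq .. ▸ hlist
      rw [grd_sat_eq hL hs, ← grd_sat_eq hL (hg' ▸ hs')]
    | retEmpty h1' hw' hl' hs' ht' =>
      have := ih h1'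
      rw [Prod.mk.injEq] at this
      exact absurd this.2 (List.cons_ne_nil _ _)
    | int h1' hw' hl' hs' ht' =>
      rw [hw] at hw'; cases hw'; rw [hl] at hl'; cases hl'
    | call h1' hw' hl' hs' ht' =>
      rw [hw] at hw'; cases hw'; rw [hl] at hl'; cases hl'
  | @retEmpty i S S₁ p φ h1 hw hl hs ht ih =>
    obtain ⟨T, rfl, rfl⟩ := ht
    cases h' with
    | retEmpty h1' hw' hl' hs' ht' =>
      obtain ⟨T', hg', rfl⟩ := ht'
      rw [hw] at hw'; injection hw' with hpp; subst hpp
      have := ih h1'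
      rw [Prod.mk.injEq] at this
      obtain ⟨rfl, -⟩ := this
      rw [grd_sat_eq hL hs, ← grd_sat_eq hL (hg' ▸ hs')]
    | ret h1' hw' hl' hs' ht' =>
      have := ih h1'
      rw [Prod.mk.injEq] at this
      exact absurd this.2.symm (List.cons_ne_nil _ _)
    | int h1' hw' hl' hs' ht' =>
      rw [hw] at hw'; cases hw'; rw [hl] at hl'; cases hl'
    | call h1' hw' hl' hs' ht' =>
      rw [hw] at hw'; cases hw'; rw [hl] at hl'; cases hl'

end Unique
section Main

variable {A Q Γ : Type} {lab : A → SymbolKind} {M : ECIDPDA A Q Γ}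
variable {L : List (ClockConstraint A)}

theorem detAut_main (hL : ∀ ψ, ψ ∈ L ↔ ψ ∈ M.atomicSet) (w : List (A × ℝ)) :
    ∀ i, i ≤ w.length → ∃ S σ,
      Reach lab (detAut lab M L) w i (S, σ) ∧ DInv lab M w i S σ := by
  intro i
  induction i with
  | zero =>
    intro _
    refine ⟨{p | p.1 ∈ M.init ∧ p.1 = p.2}, [], Reach.start rfl, rfl, ?_, ?_⟩
    · rintro p ⟨h1, h2⟩
      exact ⟨h1, [], h2 ▸ Reach.start h1⟩
    · intro q' γ hr
      cases hr with
      | start h => exact ⟨q', h, rfl⟩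
  | succ i IH =>
    intro hsucc
    have hi : i < w.length := hsucc
    obtain ⟨S, σ, hB, hI⟩ := IH (le_of_lt hi)
    obtain ⟨p, hw⟩ : ∃ p, w[i]? = some p := ⟨w[i], List.getElem?_eq_getElem hi⟩
    have hsatU : Sat lab w i (grd M L (trueT M lab w i)) := grd_sat_trueT hL w i
    have hev : ∀ φ, φ ∈ M.used → (evalB M (trueT M lab w i) φ ↔ Sat lab w i φ) :=
      fun φ hφ => evalB_correct M lab w i φ (M.used_atoms hφ)
    cases hk : lab p.1 with
    | int =>
      refine ⟨intStep M p.1 S (trueT M lab w i), σ,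
        Reach.int hB hw hk hsatU ⟨_, rfl, rfl⟩, ?_⟩
      have hh : height lab w (i + 1) = height lab w i := by simp only [height, hw, hk]
      cases σ with
      | nil =>
        obtain ⟨h0, hsound, hcomp⟩ := hI
        refine ⟨hh.trans h0, ?_, ?_⟩
        · rintro p' ⟨q₁, φ, hp1, hev1, ht⟩
          have hused : φ ∈ M.used := Or.inl ⟨p.1, q₁, ⟨p'.2, ht⟩⟩
          obtain ⟨hinit, γ, hr⟩ := hsound (p'.1, q₁) hp1
          exact ⟨hinit, γ, Reach.int hr hw hk ((hev φ hused).mp hev1) ht⟩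
        · intro q' γ hr
          cases hr with
          | int h1 hw' hl' hs' ht' =>
            rw [hw] at hw'; injection hw' with hpp; subst hpp
            rename_i q₃ φ'
            obtain ⟨q, hq⟩ := hcomp _ _ h1
            have hused : φ' ∈ M.used := Or.inl ⟨p.1, _, ⟨q', ht'⟩⟩
            exact ⟨q, _, _, hq, (hev _ hused).mpr hs', ht'⟩
          | call h1 hw' hl' hs' ht' =>
            rw [hw] at hw'; injection hw' with hpp; subst hpp; rw [hk] at hl'; cases hl'
          | ret h1 hw' hl' hs' ht' =>
            rw [hw] at hw'; injection hw' with hpp; subst hpp; rw [hk] at hl'; cases hl'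
          | retEmpty h1 hw' hl' hs' ht' =>
            rw [hw] at hw'; injection hw' with hpp; subst hpp; rw [hk] at hl'; cases hl'
      | cons t σ' =>
        obtain ⟨cp, hcp, hwcp, hT, hIcp, hh1, hh2, hmin, hsound, hcomp⟩ := hI
        refine ⟨cp, by omega, hwcp, hT, hIcp, hh1, hh.trans hh2, ?_, ?_, ?_⟩
        · intro k h1 h2
          rcases (show k ≤ i ∨ k = i + 1 by omega) with h2 | rfl
          · exact hmin k h1 (by omega)
          · rw [hh]; omega
        · rintro p' ⟨q₁, φ, hp1, hev1, ht⟩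
          have hused : φ ∈ M.used := Or.inl ⟨p.1, q₁, ⟨p'.2, ht⟩⟩
          obtain ⟨⟨δ, hr1⟩, ⟨μ, hr2⟩⟩ := hsound (p'.1, q₁) hp1
          exact ⟨⟨δ, hr1⟩, μ, SegReach.int hr2 hw hk ((hev φ hused).mp hev1) ht⟩
        · rintro q₂ q₃ hre ⟨μ, hseg⟩
          cases hseg with
          | start => omega
          | int h1 hw' hl' hs' ht' =>
            rw [hw] at hw'; injection hw' with hpp; subst hpp
            rename_i qmid φ'
            have hused : φ' ∈ M.used := Or.inl ⟨p.1, _, ⟨q₃, ht'⟩⟩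
            exact ⟨_, _, hcomp q₂ _ hre ⟨μ, h1⟩, (hev _ hused).mpr hs', ht'⟩
          | call h1 hw' hl' hs' ht' =>
            rw [hw] at hw'; injection hw' with hpp; subst hpp; rw [hk] at hl'; cases hl'
          | ret h1 hw' hl' hs' ht' =>
            rw [hw] at hw'; injection hw' with hpp; subst hpp; rw [hk] at hl'; cases hl'
    | call =>
      refine ⟨callStep M p.1 S (trueT M lab w i), (S, ⟨p.1, hk⟩, trueT M lab w i) :: σ,
        Reach.call hB hw hk hsatU ⟨_, hk, rfl, rfl⟩, ?_⟩
      have hhS : height lab w i = σ.length := inv_height hI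
      have hh : height lab w (i + 1) = σ.length + 1 := by
        simp only [height, hw, hk]; omega
      refine ⟨i, Nat.lt_succ_self i, ⟨p.2, by rwa [Prod.mk.eta]⟩, rfl, hI, hh, hh, ?_, ?_, ?_⟩
      · intro k h1 h2
        have : k = i + 1 := by omega
        subst this; omega
      · rintro p' ⟨hpe, q, q₁, φ, γ, hq, hev1, ht⟩
        have hused : φ ∈ M.used := Or.inr (Or.inl ⟨p.1, q₁, ⟨(p'.1, γ), ht⟩⟩)
        obtain ⟨γ₀, hr⟩ := inv_sound hI (q, q₁) hq
        refine ⟨⟨γ :: γ₀, Reach.call hr hw hk ((hev φ hused).mp hev1) ht⟩, [], ?_⟩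
        rw [← hpe]
        exact SegReach.start
      · rintro q₂ q₃ ⟨δ, hrd⟩ ⟨μ, hseg⟩
        obtain ⟨rfl, rfl⟩ := Prod.mk.injEq .. ▸ segreach_self hseg
        cases hrd with
        | call h1 hw' hl' hs' ht' =>
          rw [hw] at hw'; injection hw' with hpp; subst hpp
          rename_i q₁ γ₀ s₀ φ'
          obtain ⟨q, hq⟩ := inv_comp hI _ _ h1
          have hused : φ' ∈ M.used := Or.inr (Or.inl ⟨p.1, _, ⟨_, ht'⟩⟩)
          exact ⟨rfl, q, _, _, _, hq, (hev _ hused).mpr hs', ht'⟩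
        | int h1 hw' hl' hs' ht' =>
          rw [hw] at hw'; injection hw' with hpp; subst hpp; rw [hk] at hl'; cases hl'
        | ret h1 hw' hl' hs' ht' =>
          rw [hw] at hw'; injection hw' with hpp; subst hpp; rw [hk] at hl'; cases hl'
        | retEmpty h1 hw' hl' hs' ht' =>
          rw [hw] at hw'; injection hw' with hpp; subst hpp; rw [hk] at hl'; cases hl'
    | ret =>
      cases σ with
      | nil =>
        obtain ⟨h0, hsound, hcomp⟩ := hI
        refine ⟨retStep lab M p.1 none S (trueT M lab w i), [],
          Reach.retEmpty hB hw hk hsatU ⟨_, rfl, rfl⟩, ?_, ?_, ?_⟩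
        · simp only [height, hw, hk]; omega
        · rintro p' ⟨q₃, φ, hp1, hev1, ht⟩
          have hused : φ ∈ M.used := Or.inr (Or.inr ⟨p.1, none, q₃, ⟨p'.2, ht⟩⟩)
          obtain ⟨hinit, γ, hr⟩ := hsound (p'.1, q₃) hp1
          have hγ : γ = [] := by
            have := reach_len hr
            rw [h0] at this
            exact List.length_eq_zero_iff.mp this
          subst hγ
          exact ⟨hinit, [], Reach.retEmpty hr hw hk ((hev φ hused).mp hev1) ht⟩
        · intro q' γ hr
          cases hr with
          | ret h1 hw' hl' hs' ht' =>
            exfalso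
            have := reach_len h1
            rw [h0] at this
            simp at this
          | retEmpty h1 hw' hl' hs' ht' =>
            rw [hw] at hw'; injection hw' with hpp; subst hpp
            rename_i q₃ φ'
            obtain ⟨q, hq⟩ := hcomp _ _ h1
            have hused : φ' ∈ M.used := Or.inr (Or.inr ⟨p.1, none, _, ⟨q', ht'⟩⟩)
            exact ⟨q, _, _, hq, (hev _ hused).mpr hs', ht'⟩
          | int h1 hw' hl' hs' ht' =>
            rw [hw] at hw'; injection hw' with hpp; subst hpp; rw [hk] at hl'; cases hl'
          | call h1 hw' hl' hs' ht' =>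
            rw [hw] at hw'; injection hw' with hpp; subst hpp; rw [hk] at hl'; cases hl'
      | cons t σ' =>
        obtain ⟨cp, hcp, ⟨τ, hwcp⟩, hT, hIcp, hh1, hh2, hmin, hsound, hcomp⟩ := hI
        have hlabc : lab t.2.1.1 = SymbolKind.call := t.2.1.2
        have hhi1 : height lab w (i + 1) = height lab w i - 1 := by
          simp only [height, hw, hk]
        refine ⟨retStep lab M p.1 (some t) S (trueT M lab w i), σ',
          Reach.ret hB hw hk hsatU ⟨_, rfl, rfl⟩, ?_⟩
        cases σ' with
        | nil =>
          obtain ⟨hcp0, hsoundcp, hcompcp⟩ := hIcp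
          have hh2' : height lab w i = 1 := by simpa using hh2
          refine ⟨by omega, ?_, ?_⟩
          · rintro p' ⟨q₁, q₂, q₃, γ, φc, φr, hq1, hevc, htc, hq23, hevr, htr⟩
            have husedc : φc ∈ M.used := Or.inr (Or.inl ⟨t.2.1.1, q₁, ⟨(q₂, γ), htc⟩⟩)
            have husedr : φr ∈ M.used := Or.inr (Or.inr ⟨p.1, some γ, q₃, ⟨p'.2, htr⟩⟩)
            obtain ⟨hinit, Δ, hrcp⟩ := hsoundcp (p'.1, q₁) hq1
            have hΔ : Δ = [] := by
              have := reach_len hrcp; rw [hcp0] at this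
              exact List.length_eq_zero_iff.mp this
            subst hΔ
            have hsatc : Sat lab w cp φc := by
              rw [hT] at hevc
              exact (evalB_correct M lab w cp φc (M.used_atoms husedc)).mp hevc
            have hr1 : Reach lab M w (cp + 1) (q₂, [γ]) :=
              Reach.call hrcp hwcp hlabc hsatc htc
            obtain ⟨-, ⟨μ, hseg⟩⟩ := hsound (q₂, q₃) hq23
            have hμ : μ = [] := by
              have := segreach_len hseg
              rw [hh1, hh2] at this
              simpa using List.length_eq_zero_iff.mp (by omega)
            subst hμ
            have hr2 : Reach lab M w i (q₃, [γ]) := segreach_lift hseg hr1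
            exact ⟨hinit, [], Reach.ret hr2 hw hk ((hev φr husedr).mp hevr) htr⟩
          · intro q' γ' hr
            cases hr with
            | ret h1 hw' hl' hs' ht' =>
              rw [hw] at hw'; injection hw' with hpp; subst hpp
              rename_i q₃ s₀ φr'
              have hlen := reach_len h1
              obtain ⟨q₂, δ, μ, heq, hrd, hseg⟩ := reach_decompose i hcp h1 hmin hh1
              have hδ : δ.length = 1 := by
                have := reach_len hrd; omega
              have hμ : μ = [] := by
                have : μ.length = 0 := by
                  have := congrArg List.length heq
                  simp only [List.length_cons, List.length_append] at this hlen
                  omega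
                exact List.length_eq_zero_iff.mp this
              subst hμ
              simp only [List.nil_append] at heq
              subst heq
              have hrdOrig := hrd
              cases hrd with
              | call h2 hw2 hl2 hs2 ht2 =>
                rw [hwcp] at hw2; injection hw2 with hpp2; subst hpp2
                rename_i q₁ φc'
                obtain ⟨q, hq⟩ := hcompcp _ _ h2
                have husedc : φc' ∈ M.used := Or.inr (Or.inl ⟨_, _, ⟨(q₂, _), ht2⟩⟩)
                have husedr : φr' ∈ M.used := Or.inr (Or.inr ⟨p.1, _, _, ⟨q', ht'⟩⟩)
                refine ⟨q, _, q₂, _, _, _, _, hq, ?_, ht2,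
                  hcomp q₂ _ ⟨_, hrdOrig⟩ ⟨[], hseg⟩, (hev _ husedr).mpr hs', ht'⟩
                rw [hT]
                exact (evalB_correct M lab w cp _ (M.used_atoms husedc)).mpr hs2
              | int h2 hw2 hl2 hs2 ht2 =>
                rw [hwcp] at hw2; injection hw2 with hpp2; subst hpp2
                rw [hlabc] at hl2; cases hl2
              | ret h2 hw2 hl2 hs2 ht2 =>
                rw [hwcp] at hw2; injection hw2 with hpp2; subst hpp2
                rw [hlabc] at hl2; cases hl2
            | retEmpty h1 hw' hl' hs' ht' =>
              exfalso
              have := reach_len h1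
              rw [hh2] at this
              simp at this
            | int h1 hw' hl' hs' ht' =>
              rw [hw] at hw'; injection hw' with hpp; subst hpp; rw [hk] at hl'; cases hl'
            | call h1 hw' hl' hs' ht' =>
              rw [hw] at hw'; injection hw' with hpp; subst hpp; rw [hk] at hl'; cases hl'
        | cons t' σ'' =>
          obtain ⟨cp', hcp', hwcp', hT', hIcp', hh1', hh2', hmin', hsound', hcomp'⟩ := hIcp
          have hh2' : height lab w i = σ''.length + 2 := by simpa using hh2
          refine ⟨cp', by omega, hwcp', hT', hIcp', hh1', by omega, ?_, ?_, ?_⟩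
          · intro k h1 h2
            rcases (show k ≤ i ∨ k = i + 1 by omega) with h2 | rfl
            · rcases le_or_gt k cp with h3 | h3
              · exact hmin' k h1 h3
              · have := hmin k h3 (by omega)
                simp only [List.length_cons] at this
                omega
            · omega
          · rintro p' ⟨q₁, q₂, q₃, γ, φc, φr, hq1, hevc, htc, hq23, hevr, htr⟩
            have husedc : φc ∈ M.used := Or.inr (Or.inl ⟨t.2.1.1, q₁, ⟨(q₂, γ), htc⟩⟩)
            have husedr : φr ∈ M.used := Or.inr (Or.inr ⟨p.1, some γ, q₃, ⟨p'.2, htr⟩⟩)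
            obtain ⟨⟨δ₀, hrd0⟩, ⟨μ₁, hseg1⟩⟩ := hsound' (p'.1, q₁) hq1
            have hsatc : Sat lab w cp φc := by
              rw [hT] at hevc
              exact (evalB_correct M lab w cp φc (M.used_atoms husedc)).mp hevc
            have hseg2 : SegReach lab M w (cp' + 1) p'.1 (cp + 1) (q₂, γ :: μ₁) :=
              SegReach.call hseg1 hwcp hlabc hsatc htc
            obtain ⟨-, ⟨μ₂, hseg3⟩⟩ := hsound (q₂, q₃) hq23
            have hμ : μ₂ = [] := by
              have := segreach_len hseg3
              rw [hh1, hh2] at this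
              exact List.length_eq_zero_iff.mp (by omega)
            subst hμ
            have hseg4 := segreach_trans hseg2 hseg3
            simp only [List.nil_append] at hseg4
            exact ⟨⟨δ₀, hrd0⟩, μ₁,
              SegReach.ret hseg4 hw hk ((hev φr husedr).mp hevr) htr⟩
          · rintro q₂₀ q₄ ⟨δ, hrd⟩ ⟨μ, hseg⟩
            cases hseg with
            | start => omega
            | ret h1 hw' hl' hs' ht' =>
              rw [hw] at hw'; injection hw' with hpp; subst hpp
              rename_i q₃ s₀ φr'
              obtain ⟨qm, δ₁, μ₂, heq, hsegL, hsegR⟩ :=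
                segreach_decompose (b := σ''.length + 1) i hcp h1 (by omega)
                  (by intro k hk1 hk2
                      have := hmin k hk1 hk2
                      simpa using this)
                  (by simpa using hh1)
              have hlen1 := segreach_len hsegL
              have hlen2 := segreach_len hsegR
              have hlen3 := segreach_len h1
              rw [hh1'] at hlen1 hlen3
              have hμ2 : μ₂ = [] := by
                refine List.length_eq_zero_iff.mp ?_
                rw [hh1] at hlen2
                simp only [List.length_cons] at hlen2 hh2
                omega
              subst hμ2
              simp only [List.nil_append] at heq
              subst heq
              have hμ : μ = [] := by
                simp only [List.length_cons] at hlen1 hh1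
                exact List.length_eq_zero_iff.mp (by omega)
              subst hμ
              have hliftL := segreach_lift hsegL hrd
              cases hsegL with
              | call h2 hw2 hl2 hs2 ht2 =>
                rw [hwcp] at hw2; injection hw2 with hpp2; subst hpp2
                rename_i q₁ φc'
                have husedc : φc' ∈ M.used := Or.inr (Or.inl ⟨_, _, ⟨(qm, _), ht2⟩⟩)
                have husedr : φr' ∈ M.used := Or.inr (Or.inr ⟨p.1, _, _, ⟨q₄, ht'⟩⟩)
                refine ⟨_, qm, _, _, _, _, hcomp' q₂₀ _ ⟨δ, hrd⟩ ⟨_, h2⟩, ?_, ht2,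
                  hcomp qm _ ⟨_, hliftL⟩ ⟨_, hsegR⟩,
                  (hev _ husedr).mpr hs', ht'⟩
                rw [hT]
                exact (evalB_correct M lab w cp _ (M.used_atoms husedc)).mpr hs2
              | int h2 hw2 hl2 hs2 ht2 =>
                rw [hwcp] at hw2; injection hw2 with hpp2; subst hpp2
                rw [hlabc] at hl2; cases hl2
              | ret h2 hw2 hl2 hs2 ht2 =>
                rw [hwcp] at hw2; injection hw2 with hpp2; subst hpp2
                rw [hlabc] at hl2; cases hl2
            | int h1 hw' hl' hs' ht' =>
              rw [hw] at hw'; injection hw' with hpp; subst hpp; rw [hk] at hl'; cases hl'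
            | call h1 hw' hl' hs' ht' =>
              rw [hw] at hw'; injection hw' with hpp; subst hpp; rw [hk] at hl'; cases hl'

end Main

/-- **Direct determinization of event-clock input-driven pushdown
automata.**  Let `M` be a nondeterministic ECIDPDA with state set `Q`,
stack alphabet `Γ`, and let `Ψ = M.atomicSet` be the (finite) set of
atomic clock constraints occurring in the clock constraints used in its
transitions.  Then there exists a deterministic ECIDPDA `B` with set of
states `2^{Q×Q}` and pushdown alphabet `2^{Q×Q} × Σ₊₁ × 2^Ψ`, all of
whose clock constraints are Boolean combinations of atomic constraints
from `Ψ`, recognizing the same set of timed strings as `M`.  (In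
particular, an `n`-state nondeterministic automaton with `k` atomic
clock constraints is simulated by a deterministic one with `2^(n²)`
states and `|Σ₊₁|·2^(n²+k)` stack symbols.) -/
theorem ecidpda_determinization {A Q Γ : Type} [Finite A] [Finite Q] [Finite Γ]
    (lab : A → SymbolKind) (M : ECIDPDA A Q Γ) (hfin : M.used.Finite) :
    ∃ B : ECIDPDA A (Set (Q × Q))
        (Set (Q × Q) × {a : A // lab a = SymbolKind.call} × Set (↥M.atomicSet)),
      ECIDPDA.Deterministic lab B ∧
      (∀ φ ∈ B.used, φ.atoms ⊆ M.atomicSet) ∧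
      (∀ w : List (A × ℝ), IsTimed w →
        (ECIDPDA.Accepts lab B w ↔ ECIDPDA.Accepts lab M w)) := by
  classical
  have hfinΨ : M.atomicSet.Finite := M.atomicSet_finite hfin
  set L : List (ClockConstraint A) := hfinΨ.toFinset.toList with hLdef
  have hL : ∀ ψ, ψ ∈ L ↔ ψ ∈ M.atomicSet := by
    intro ψ
    rw [hLdef, Finset.mem_toList, Set.Finite.mem_toFinset]
  refine ⟨detAut lab M L, detAut_deterministic hL,
    detAut_used_atoms (fun ψ h => (hL ψ).mp h), ?_⟩
  intro w _
  obtain ⟨S, σ, hB, hI⟩ := detAut_main hL w w.length le_rfl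
  constructor
  · rintro ⟨S', σ', hB', hF⟩
    obtain ⟨p, hp, hpf⟩ := hF
    have heq : ((S', σ') : Set (Q × Q) × List (DStack lab M)) = (S, σ) :=
      detAut_unique hL hB' hB
    rw [Prod.mk.injEq] at heq
    obtain ⟨rfl, rfl⟩ := heq
    obtain ⟨γ, hr⟩ := inv_sound hI p hp
    exact ⟨p.2, γ, hr, hpf⟩
  · rintro ⟨q, γ, hr, hq⟩
    obtain ⟨q0, hq0⟩ := inv_comp hI q γ hr
    exact ⟨S, σ, hB, ⟨(q0, q), hq0, hq⟩⟩
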